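/- Consider an MDP whose transition dynamics have multiplicative action variation δ_P, i.e., P_h(x'|x,a) ≤ δ_P · P_h(x'|x,a') for all x, x', a, a', h. Let π̃ be any policy satisfying π̃_h(a|x) ≥ ε/A for all x, a, h. Then for every policy π, every step h, and every state-action pair (x,a), the occupancy measures satisfy μ^π_h(x,a) ≤ (A δ_P^{H}/ε) · μ^{π̃}_h(x,a). -/

import Mathlib

open Finset

noncomputable section

variable {X A : Type*}

/-- State occupancy measure of policy `π` at step `h`, started at `x1` at step 0. -/
def occ [Fintype X] [Fintype A] [DecidableEq X] (P : ℕ → X → A → X → ℝ)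
    (π : ℕ → X → A → ℝ) (x1 : X) : ℕ → X → ℝ
  | 0 => fun x => if x = x1 then 1 else 0
  | h + 1 => fun x' => ∑ x, ∑ a, occ P π x1 h x * π h x a * P h x a x'

/-- State-action occupancy measure `μ^π_h(x,a)`. -/
def occSA [Fintype X] [Fintype A] [DecidableEq X] (P : ℕ → X → A → X → ℝ)
    (π : ℕ → X → A → ℝ) (x1 : X) (h : ℕ) (x : X) (a : A) : ℝ :=
  occ P π x1 h x * π h x a

lemma occ_nonneg [Fintype X] [Fintype A] [DecidableEq X] (P : ℕ → X → A → X → ℝ)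
    (π : ℕ → X → A → ℝ) (x1 : X)
    (hP0 : ∀ h x a x', 0 ≤ P h x a x') (hπ0 : ∀ h x a, 0 ≤ π h x a) :
    ∀ h x, 0 ≤ occ P π x1 h x := by
  intro h
  induction h with
  | zero => intro x; simp only [occ]; split <;> norm_num
  | succ h ih =>
    intro x'
    exact Finset.sum_nonneg fun x _ => Finset.sum_nonneg fun a _ =>
      mul_nonneg (mul_nonneg (ih x) (hπ0 h x a)) (hP0 h x a x')

lemma occ_key [Fintype X] [Fintype A] [DecidableEq X]
    (P : ℕ → X → A → X → ℝ) (x1 : X) (δ : ℝ) (hδ : 1 ≤ δ)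
    (hP0 : ∀ h x a x', 0 ≤ P h x a x')
    (hav : ∀ h x x' a a', P h x a x' ≤ δ * P h x a' x')
    (π πt : ℕ → X → A → ℝ)
    (hπ0 : ∀ h x a, 0 ≤ π h x a) (hπsum : ∀ h x, ∑ a, π h x a = 1)
    (hπt0 : ∀ h x a, 0 ≤ πt h x a) (hπtsum : ∀ h x, ∑ a, πt h x a = 1) :
    ∀ h x, occ P π x1 h x ≤ δ ^ h * occ P πt x1 h x := by
  intro h
  induction h with
  | zero => intro x; simp [occ]
  | succ h ih =>
    intro x'
    have key : ∀ x, ∑ a, π h x a * P h x a x' ≤ δ * ∑ a, πt h x a * P h x a x' := by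
      intro x
      have hS : ∀ b, ∑ a, π h x a * P h x a x' ≤ δ * P h x b x' := by
        intro b
        calc ∑ a, π h x a * P h x a x' ≤ ∑ a, π h x a * (δ * P h x b x') := by
              apply Finset.sum_le_sum
              intro a _
              exact mul_le_mul_of_nonneg_left (hav h x x' a b) (hπ0 h x a)
          _ = δ * P h x b x' := by rw [← Finset.sum_mul, hπsum]; ring
      calc ∑ a, π h x a * P h x a x'
          = ∑ b, πt h x b * (∑ a, π h x a * P h x a x') := by
            rw [← Finset.sum_mul, hπtsum]; ring
        _ ≤ ∑ b, πt h x b * (δ * P h x b x') := by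
            apply Finset.sum_le_sum
            intro b _
            exact mul_le_mul_of_nonneg_left (hS b) (hπt0 h x b)
        _ = δ * ∑ a, πt h x a * P h x a x' := by
            rw [Finset.mul_sum]; apply Finset.sum_congr rfl; intro b _; ring
    show (∑ x, ∑ a, occ P π x1 h x * π h x a * P h x a x') ≤
        δ ^ (h + 1) * ∑ x, ∑ a, occ P πt x1 h x * πt h x a * P h x a x'
    rw [Finset.mul_sum]
    apply Finset.sum_le_sum
    intro x _
    have h1 : ∑ a, occ P π x1 h x * π h x a * P h x a x'
        = occ P π x1 h x * ∑ a, π h x a * P h x a x' := by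
      rw [Finset.mul_sum]; apply Finset.sum_congr rfl; intro a _; ring
    have h2 : δ ^ (h + 1) * ∑ a, occ P πt x1 h x * πt h x a * P h x a x'
        = (δ ^ h * occ P πt x1 h x) * (δ * ∑ a, πt h x a * P h x a x') := by
      rw [Finset.mul_sum, Finset.mul_sum, Finset.mul_sum]
      apply Finset.sum_congr rfl; intro a _; ring
    rw [h1, h2]
    apply mul_le_mul (ih x) (key x)
    · exact Finset.sum_nonneg fun a _ => mul_nonneg (hπ0 h x a) (hP0 h x a x')
    · exact mul_nonneg (pow_nonneg (le_trans zero_le_one hδ) h)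
        (occ_nonneg P πt x1 hP0 hπt0 h x)

/-- If the transition dynamics have multiplicative action variation `δ`
(`P_h(x'|x,a) ≤ δ · P_h(x'|x,a')` for all `x, x', a, a', h`) and the exploration policy
`πt` puts probability at least `ε/A` on every action, then for every policy `π`, step
`h ≤ H` and pair `(x,a)`, `μ^π_h(x,a) ≤ (A δ^H / ε) · μ^{πt}_h(x,a)`. -/
theorem occupancy_multiplicative_action_variation
    [Fintype X] [Fintype A] [DecidableEq X]
    (H : ℕ) (P : ℕ → X → A → X → ℝ) (x1 : X) (δ ε : ℝ)
    (hδ : 1 ≤ δ) (hε : 0 < ε)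
    (hP0 : ∀ h x a x', 0 ≤ P h x a x')
    (hPsum : ∀ h x a, ∑ x', P h x a x' = 1)
    (hav : ∀ h x x' a a', P h x a x' ≤ δ * P h x a' x')
    (π πt : ℕ → X → A → ℝ)
    (hπ0 : ∀ h x a, 0 ≤ π h x a) (hπsum : ∀ h x, ∑ a, π h x a = 1)
    (hπt0 : ∀ h x a, 0 ≤ πt h x a) (hπtsum : ∀ h x, ∑ a, πt h x a = 1)
    (hπtlb : ∀ h x a, ε / Fintype.card A ≤ πt h x a) :
    ∀ h ≤ H, ∀ x a,
      occSA P π x1 h x a ≤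
        ((Fintype.card A : ℝ) * δ ^ H / ε) * occSA P πt x1 h x a := by
  intro h hH x a
  have hδ0 : (0:ℝ) ≤ δ := le_trans zero_le_one hδ
  have hAne : (Fintype.card A : ℝ) ≠ 0 := by
    have : Fintype.card A ≠ 0 := by
      intro h0
      have h0' : IsEmpty A := Fintype.card_eq_zero_iff.mp h0
      have := hπsum 0 x
      simp at this
    exact_mod_cast this
  have hApos : (0:ℝ) < Fintype.card A := by
    rcases lt_or_eq_of_le (Nat.cast_nonneg (Fintype.card A) : (0:ℝ) ≤ _) with h' | h'
    · exact h'
    · exact absurd h'.symm hAne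
  have hπle1 : π h x a ≤ 1 := by
    rw [← hπsum h x]
    exact Finset.single_le_sum (fun b _ => hπ0 h x b) (Finset.mem_univ a)
  have h1le : 1 ≤ (Fintype.card A : ℝ) / ε * πt h x a := by
    have := hπtlb h x a
    rw [div_le_iff₀ hApos] at this
    rw [div_mul_eq_mul_div, le_div_iff₀ hε, one_mul, mul_comm]
    exact this
  have hocc : occ P π x1 h x ≤ δ ^ H * occ P πt x1 h x := by
    calc occ P π x1 h x ≤ δ ^ h * occ P πt x1 h x :=
          occ_key P x1 δ hδ hP0 hav π πt hπ0 hπsum hπt0 hπtsum h x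
      _ ≤ δ ^ H * occ P πt x1 h x :=
          mul_le_mul_of_nonneg_right (pow_le_pow_right₀ hδ hH)
            (occ_nonneg P πt x1 hP0 hπt0 h x)
  have hocc0 : 0 ≤ occ P π x1 h x := occ_nonneg P π x1 hP0 hπ0 h x
  show occ P π x1 h x * π h x a ≤
      ((Fintype.card A : ℝ) * δ ^ H / ε) * (occ P πt x1 h x * πt h x a)
  have step : occ P π x1 h x * π h x a ≤
      (δ ^ H * occ P πt x1 h x) * ((Fintype.card A : ℝ) / ε * πt h x a) := by
    apply mul_le_mul hocc (le_trans hπle1 h1le) (hπ0 h x a)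
    exact mul_nonneg (pow_nonneg hδ0 H) (occ_nonneg P πt x1 hP0 hπt0 h x)
  calc occ P π x1 h x * π h x a
      ≤ (δ ^ H * occ P πt x1 h x) * ((Fintype.card A : ℝ) / ε * πt h x a) := step
    _ = ((Fintype.card A : ℝ) * δ ^ H / ε) * (occ P πt x1 h x * πt h x a) := by
        field_simp

end
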